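/- Let 0 < a < 1, μ > 0 and ξ ≥ 0 be real numbers, and let K, N ∈ ℕ with K ≤ N. Then ∑_{m=0}^∞ (1+ξ)^m·(a^m)^{K+1}·(1 − a^m)^{N−K}·Po(m;μ) = e^{μ·ξ}·f_d(μ·(1+ξ), a; K+1, N−K). -/
import Mathlib


open Real Filter Set MeasureTheory

/-- Poisson PMF with parameter `μ` evaluated at `m`. -/
noncomputable def poissonPMF (μ : ℝ) (m : ℕ) : ℝ :=
  Real.exp (-μ) * μ ^ m / (Nat.factorial m : ℝ)

/-- `fd ν a k l = ∑_{j=0}^l C(l,j)·(−1)^j·e^{−ν(1−a^{k+j})}`. -/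
noncomputable def fd (ν a : ℝ) (k l : ℕ) : ℝ :=
  ∑ j ∈ Finset.range (l + 1),
    (Nat.choose l j : ℝ) * (-1) ^ j * Real.exp (-(ν * (1 - a ^ (k + j))))

lemma tsum_pow_div_fact (x : ℝ) : ∑' n : ℕ, x ^ n / (Nat.factorial n : ℝ) = Real.exp x := by
  rw [Real.exp_eq_exp_ℝ, NormedSpace.exp_eq_tsum_div]

theorem poisson_tilted_moment_identity
    (a μ ξ : ℝ) (ha0 : 0 < a) (ha1 : a < 1) (hμ : 0 < μ) (hξ : 0 ≤ ξ)
    (K N : ℕ) (hKN : K ≤ N) :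
    ∑' m : ℕ, (1 + ξ) ^ m * (a ^ m) ^ (K + 1) * (1 - a ^ m) ^ (N - K) * poissonPMF μ m =
      Real.exp (μ * ξ) * fd (μ * (1 + ξ)) a (K + 1) (N - K) := by
  set l := N - K with hl
  have hterm : ∀ m : ℕ,
      (1 + ξ) ^ m * (a ^ m) ^ (K + 1) * (1 - a ^ m) ^ l * poissonPMF μ m =
      ∑ j ∈ Finset.range (l + 1),
        ((Nat.choose l j : ℝ) * (-1) ^ j * Real.exp (-μ)) *
          ((μ * (1 + ξ) * a ^ (K + 1 + j)) ^ m / (Nat.factorial m : ℝ)) := by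
    intro m
    have hexp : (1 - a ^ m) ^ l =
        ∑ j ∈ Finset.range (l + 1), (-(a ^ m)) ^ j * (1 : ℝ) ^ (l - j) * (Nat.choose l j : ℝ) := by
      rw [← add_pow]; ring_nf
    rw [poissonPMF, hexp, Finset.mul_sum, Finset.sum_mul]
    refine Finset.sum_congr rfl fun j _ => ?_
    have h1 : (μ * (1 + ξ) * a ^ (K + 1 + j)) ^ m
        = μ ^ m * (1 + ξ) ^ m * (a ^ m) ^ (K + 1 + j) := by
      rw [mul_pow, mul_pow, ← pow_mul, ← pow_mul, Nat.mul_comm]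
    rw [h1, neg_pow, pow_add]
    field_simp
    ring
  have hsummable : ∀ j : ℕ, Summable fun m : ℕ =>
      ((Nat.choose l j : ℝ) * (-1) ^ j * Real.exp (-μ)) *
        ((μ * (1 + ξ) * a ^ (K + 1 + j)) ^ m / (Nat.factorial m : ℝ)) :=
    fun j => (Real.summable_pow_div_factorial _).mul_left _
  calc ∑' m : ℕ, (1 + ξ) ^ m * (a ^ m) ^ (K + 1) * (1 - a ^ m) ^ l * poissonPMF μ m
      = ∑' m : ℕ, ∑ j ∈ Finset.range (l + 1),
        ((Nat.choose l j : ℝ) * (-1) ^ j * Real.exp (-μ)) *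
          ((μ * (1 + ξ) * a ^ (K + 1 + j)) ^ m / (Nat.factorial m : ℝ)) := by
        exact tsum_congr hterm
    _ = ∑ j ∈ Finset.range (l + 1), ∑' m : ℕ,
        ((Nat.choose l j : ℝ) * (-1) ^ j * Real.exp (-μ)) *
          ((μ * (1 + ξ) * a ^ (K + 1 + j)) ^ m / (Nat.factorial m : ℝ)) :=
        Summable.tsum_finsetSum fun j _ => hsummable j
    _ = Real.exp (μ * ξ) * fd (μ * (1 + ξ)) a (K + 1) l := by
        rw [fd, Finset.mul_sum]
        refine Finset.sum_congr rfl fun j _ => ?_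
        rw [tsum_mul_left, tsum_pow_div_fact]
        have h2 : Real.exp (-μ) * Real.exp (μ * (1 + ξ) * a ^ (K + 1 + j)) =
            Real.exp (μ * ξ) * Real.exp (-(μ * (1 + ξ) * (1 - a ^ (K + 1 + j)))) := by
          rw [← Real.exp_add, ← Real.exp_add]; congr 1; ring
        calc (Nat.choose l j : ℝ) * (-1) ^ j * Real.exp (-μ) *
              Real.exp (μ * (1 + ξ) * a ^ (K + 1 + j))
            = (Nat.choose l j : ℝ) * (-1) ^ j *
              (Real.exp (-μ) * Real.exp (μ * (1 + ξ) * a ^ (K + 1 + j))) := by ring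
          _ = _ := by rw [h2]; ring
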